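/- (Local discrete lower bound, abstract form of the second inequality of Lemma 3.1 for zero order operators.) Let S ⊆ S′ be closed subspaces of H = L²(X, μ) and E ⊆ X a measurable set. Let u_S and u_{S′} be the Galerkin approximations from S and S′ of the solution of Au = f, and r_S = f − A u_S. Then for every v ∈ S′ that vanishes μ-almost everywhere outside E, one has ‖r_S‖_E ≤ β ‖u_S − u_{S′}‖ + 2 ‖r_S − v‖_E. -/

import Mathlib

open MeasureTheory
open scoped RealInnerProductSpace ENNReal

lemma aux_inner_restrict {X : Type*} [MeasurableSpace X] {μ : Measure X} {E : Set X}
    (g h : Lp ℝ 2 μ) (hg : MemLp (g : X → ℝ) 2 (μ.restrict E))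
    (hh : MemLp (h : X → ℝ) 2 (μ.restrict E)) :
    ⟪hg.toLp g, hh.toLp h⟫ = ∫ x in E, (g x) * (h x) ∂μ := by
  rw [L2.inner_def]
  refine integral_congr_ae ?_
  filter_upwards [hg.coeFn_toLp, hh.coeFn_toLp] with x h1 h2
  simp [h1, h2, RCLike.inner_apply, mul_comm]

lemma aux_norm_restrict {X : Type*} [MeasurableSpace X] {μ : Measure X} {E : Set X}
    (g : Lp ℝ 2 μ) (hg : MemLp (g : X → ℝ) 2 (μ.restrict E)) :
    Real.sqrt (∫ x in E, (g x) ^ 2 ∂μ) = ‖hg.toLp g‖ := by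
  have h := aux_inner_restrict g g hg hg
  rw [real_inner_self_eq_norm_sq] at h
  rw [show (∫ x in E, (g x) ^ 2 ∂μ) = ∫ x in E, (g x) * (g x) ∂μ by
      simp [sq], ← h, Real.sqrt_sq (norm_nonneg _)]

/-- Local discrete lower bound (abstract form of the second inequality of Lemma 3.1
for zero order operators): for every `v ∈ S'` vanishing a.e. outside `E`,
`‖r_S‖_E ≤ β ‖u_S − u_{S'}‖ + 2 ‖r_S − v‖_E`, where `r_S = f − A u_S`
and `‖g‖_E = (∫_E g² dμ)^{1/2}`. -/
theorem local_discrete_lower_bound_zero_order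
    {X : Type*} [MeasurableSpace X] (μ : Measure X)
    (A : Lp ℝ 2 μ →L[ℝ] Lp ℝ 2 μ) (α β : ℝ) (hα : 0 < α) (hαβ : α ≤ β)
    (hsym : ∀ v w : Lp ℝ 2 μ, ⟪A v, w⟫ = ⟪v, A w⟫)
    (hcoer : ∀ v : Lp ℝ 2 μ, α * ‖v‖ ^ 2 ≤ ⟪A v, v⟫)
    (hbdd : ∀ v : Lp ℝ 2 μ, ‖A v‖ ≤ β * ‖v‖)
    (f u : Lp ℝ 2 μ) (hu : A u = f)
    (S S' : Submodule ℝ (Lp ℝ 2 μ)) [CompleteSpace S] [CompleteSpace S'] (hSS' : S ≤ S')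
    (E : Set X) (hE : MeasurableSet E)
    (uS uS' : Lp ℝ 2 μ) (huS : uS ∈ S) (huS' : uS' ∈ S')
    (hGalS : ∀ v ∈ S, ⟪A uS, v⟫ = ⟪f, v⟫)
    (hGalS' : ∀ v ∈ S', ⟪A uS', v⟫ = ⟪f, v⟫) :
    ∀ v : Lp ℝ 2 μ, v ∈ S' → (∀ᵐ x ∂μ, x ∉ E → v x = 0) →
      Real.sqrt (∫ x in E, ((f - A uS : Lp ℝ 2 μ) x) ^ 2 ∂μ) ≤
        β * ‖uS - uS'‖ +
          2 * Real.sqrt (∫ x in E, ((f - A uS - v : Lp ℝ 2 μ) x) ^ 2 ∂μ) := by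
  intro v hvS' hv0
  set r : Lp ℝ 2 μ := f - A uS with hrdef
  have hmr : MemLp (r : X → ℝ) 2 (μ.restrict E) := (Lp.memLp r).restrict E
  have hmv : MemLp (v : X → ℝ) 2 (μ.restrict E) := (Lp.memLp v).restrict E
  have hmw : MemLp ((r - v : Lp ℝ 2 μ) : X → ℝ) 2 (μ.restrict E) :=
    (Lp.memLp (r - v)).restrict E
  set R : Lp ℝ 2 (μ.restrict E) := hmr.toLp _ with hR
  set V : Lp ℝ 2 (μ.restrict E) := hmv.toLp _ with hV
  set W : Lp ℝ 2 (μ.restrict E) := hmw.toLp _ with hW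
  have hWRV : W = R - V := by
    rw [hW, hR, hV, ← MemLp.toLp_sub]
    exact MemLp.toLp_congr _ _ (ae_restrict_of_ae (Lp.coeFn_sub r v))
  -- goal in terms of norms
  rw [aux_norm_restrict r hmr, aux_norm_restrict (r - v) hmw, ← hR, ← hW, hWRV]
  -- inner product of r and v over μ equals inner over restricted measure
  have hrv_int : Integrable (fun x => (r x) * (v x)) μ := by
    have := L2.integrable_inner (𝕜 := ℝ) r v
    simpa [RCLike.inner_apply, mul_comm] using this
  have hinner_rv : ⟪r, v⟫ = ⟪R, V⟫ := by
    rw [aux_inner_restrict r v hmr hmv, L2.inner_def]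
    have hsplit := (integral_add_compl hE hrv_int).symm
    have hz : (∫ x in Eᶜ, (r x) * (v x) ∂μ) = 0 := by
      have he : (fun x => (r x) * (v x)) =ᵐ[μ.restrict Eᶜ] 0 := by
        filter_upwards [ae_restrict_of_ae hv0, ae_restrict_mem hE.compl] with x h1 h2
        simp [h1 h2]
      rw [integral_congr_ae he]
      simp
    have : (∫ x, (r x) * (v x) ∂μ) = ∫ x in E, (r x) * (v x) ∂μ := by
      rw [hsplit, hz, add_zero]
    rw [← this]
    exact (integral_congr_ae (Filter.Eventually.of_forall fun x => by simp [RCLike.inner_apply, mul_comm])).symm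
  -- ⟪r, v⟫ = ⟪A (uS' - uS), v⟫
  have hGal : ⟪r, v⟫ = ⟪A (uS' - uS), v⟫ := by
    rw [hrdef, inner_sub_left, map_sub, inner_sub_left, hGalS' v hvS']
  -- norm of v equals norm of V
  have hnv : ‖v‖ = ‖V‖ := by
    have h1 : ‖v‖ ^ 2 = ∫ x, (v x) * (v x) ∂μ := by
      rw [← real_inner_self_eq_norm_sq, L2.inner_def]
      refine integral_congr_ae ?_
      filter_upwards with x
      simp [RCLike.inner_apply, sq]
    have h2 : ‖V‖ ^ 2 = ∫ x in E, (v x) * (v x) ∂μ := by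
      rw [← real_inner_self_eq_norm_sq, hV, aux_inner_restrict v v hmv hmv]
    have hvv_int : Integrable (fun x => (v x) * (v x)) μ := by
      have := L2.integrable_inner (𝕜 := ℝ) v v
      simpa [RCLike.inner_apply, sq] using this
    have hz : (∫ x in Eᶜ, (v x) * (v x) ∂μ) = 0 := by
      have he : (fun x => (v x) * (v x)) =ᵐ[μ.restrict Eᶜ] 0 := by
        filter_upwards [ae_restrict_of_ae hv0, ae_restrict_mem hE.compl] with x h1 h2
        simp [h1 h2]
      rw [integral_congr_ae he]
      simp
    have hsq : ‖v‖ ^ 2 = ‖V‖ ^ 2 := by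
      rw [h1, h2, ← integral_add_compl hE hvv_int, hz, add_zero]
    calc ‖v‖ = Real.sqrt (‖v‖ ^ 2) := (Real.sqrt_sq (norm_nonneg v)).symm
    _ = Real.sqrt (‖V‖ ^ 2) := by rw [hsq]
    _ = ‖V‖ := Real.sqrt_sq (norm_nonneg V)
  -- key identity
  have hkey : ‖R‖ ^ 2 = ⟪r, v⟫ + ⟪R, R - V⟫ := by
    rw [hinner_rv, ← inner_add_right, ← real_inner_self_eq_norm_sq]
    congr 1
    abel
  set a := ‖R‖ with ha
  set b := ‖R - V‖ with hb
  set c := β * ‖uS - uS'‖ with hc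
  have hbeta : 0 < β := lt_of_lt_of_le hα hαβ
  have hcnn : 0 ≤ c := mul_nonneg hbeta.le (norm_nonneg _)
  have hann : 0 ≤ a := norm_nonneg _
  have hbnn : 0 ≤ b := norm_nonneg _
  have hVab : ‖V‖ ≤ a + b := by
    calc ‖V‖ = ‖R - (R - V)‖ := by congr 1; abel
    _ ≤ ‖R‖ + ‖R - V‖ := norm_sub_le _ _
  have hbound : ⟪r, v⟫ ≤ c * (a + b) := by
    rw [hGal]
    calc ⟪A (uS' - uS), v⟫ ≤ ‖A (uS' - uS)‖ * ‖v‖ := real_inner_le_norm _ _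
    _ ≤ (β * ‖uS' - uS‖) * ‖v‖ :=
        mul_le_mul_of_nonneg_right (hbdd _) (norm_nonneg _)
    _ = c * ‖V‖ := by rw [hnv, hc, norm_sub_rev]
    _ ≤ c * (a + b) := mul_le_mul_of_nonneg_left hVab hcnn
  have hcs : ⟪R, R - V⟫ ≤ a * b := real_inner_le_norm _ _
  have hfin : a ^ 2 ≤ c * (a + b) + a * b := by
    rw [ha, hkey]
    linarith [hbound, hcs]
  rcases le_or_gt a c with h | h
  · linarith
  · nlinarith
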